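/- Let σ be an up-down permutation of length 2n and suppose σ(2j) = 2n for some j with j ≥ k+2 where k ≥ 0. Then mmp^{(1,0,0,0)}(σ) > n+k. -/

import Mathlib

open Finset

/-- Number of indices `i` such that there exists `j > i` with `σ j > σ i`
    (the statistic mmp^{(1,0,0,0)}). -/
noncomputable def mmp1000 {n : ℕ} (σ : Equiv.Perm (Fin n)) : ℕ :=
  (Finset.univ.filter (fun i : Fin n => ∃ j : Fin n, i < j ∧ σ i < σ j)).card

/-- Number of indices `i` such that there exists `j < i` with `σ j > σ i`
    (the statistic mmp^{(0,1,0,0)}). -/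
noncomputable def mmp0100 {n : ℕ} (σ : Equiv.Perm (Fin n)) : ℕ :=
  (Finset.univ.filter (fun i : Fin n => ∃ j : Fin n, j < i ∧ σ i < σ j)).card

/-- Number of indices `i` such that there exists `j > i` with `σ j < σ i`
    (the statistic mmp^{(0,0,0,1)}). -/
noncomputable def mmp0001 {n : ℕ} (σ : Equiv.Perm (Fin n)) : ℕ :=
  (Finset.univ.filter (fun i : Fin n => ∃ j : Fin n, i < j ∧ σ j < σ i)).card

/-- σ is up-down: σ(1) < σ(2) > σ(3) < σ(4) > ⋯ (0-indexed: ascent at even indices). -/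
def IsUpDown {n : ℕ} (σ : Equiv.Perm (Fin n)) : Prop :=
  ∀ i : Fin n, ∀ h : (i : ℕ) + 1 < n,
    if (i : ℕ) % 2 = 0 then σ i < σ ⟨(i : ℕ) + 1, h⟩ else σ ⟨(i : ℕ) + 1, h⟩ < σ i

/-- σ is down-up: σ(1) > σ(2) < σ(3) > σ(4) < ⋯ (0-indexed: descent at even indices). -/
def IsDownUp {n : ℕ} (σ : Equiv.Perm (Fin n)) : Prop :=
  ∀ i : Fin n, ∀ h : (i : ℕ) + 1 < n,
    if (i : ℕ) % 2 = 0 then σ ⟨(i : ℕ) + 1, h⟩ < σ i else σ i < σ ⟨(i : ℕ) + 1, h⟩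

open scoped Classical in
/-- The set of up-down permutations of length `m`. -/
noncomputable def UDset (m : ℕ) : Finset (Equiv.Perm (Fin m)) :=
  Finset.univ.filter (fun σ => IsUpDown σ)

open scoped Classical in
/-- The set of down-up permutations of length `m`. -/
noncomputable def DUset (m : ℕ) : Finset (Equiv.Perm (Fin m)) :=
  Finset.univ.filter (fun σ => IsDownUp σ)

/-- The reverse of σ: σ^r(i) = σ(n+1-i). -/
def permReverse {n : ℕ} (σ : Equiv.Perm (Fin n)) : Equiv.Perm (Fin n) :=
  Fin.revPerm.trans σ

/-- The complement of σ: σ^c(i) = n+1-σ(i). -/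
def permComplement {n : ℕ} (σ : Equiv.Perm (Fin n)) : Equiv.Perm (Fin n) :=
  σ.trans Fin.revPerm

/-- A_{2n}(x) = Σ_{σ ∈ UD_{2n}} x^{mmp^{(1,0,0,0)}(σ)}. -/
noncomputable def Apoly (n : ℕ) (x : ℤ) : ℤ :=
  ∑ σ ∈ UDset (2 * n), x ^ mmp1000 σ

/-- B_{2n+1}(x) = Σ_{σ ∈ UD_{2n+1}} x^{mmp^{(1,0,0,0)}(σ)}. -/
noncomputable def Bpoly (n : ℕ) (x : ℤ) : ℤ :=
  ∑ σ ∈ UDset (2 * n + 1), x ^ mmp1000 σ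

/-- C_{2n}(x) = Σ_{σ ∈ DU_{2n}} x^{mmp^{(1,0,0,0)}(σ)}. -/
noncomputable def Cpoly (n : ℕ) (x : ℤ) : ℤ :=
  ∑ σ ∈ DUset (2 * n), x ^ mmp1000 σ

/-- D_{2n+1}(x) = Σ_{σ ∈ DU_{2n+1}} x^{mmp^{(1,0,0,0)}(σ)}. -/
noncomputable def Dpoly (n : ℕ) (x : ℤ) : ℤ :=
  ∑ σ ∈ DUset (2 * n + 1), x ^ mmp1000 σ

/-- Number of up-down permutations of length m. -/
noncomputable def udCount (m : ℕ) : ℕ := (UDset m).card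

/-- Number of down-up permutations of length m. -/
noncomputable def duCount (m : ℕ) : ℕ := (DUset m).card

open scoped Classical in
/-- |{σ ∈ UD_{2m} : mmp^{(1,0,0,0)}(σ) = c}|. -/
noncomputable def AcountEq (m c : ℕ) : ℕ :=
  ((UDset (2 * m)).filter (fun σ => mmp1000 σ = c)).card

open scoped Classical in
/-- |{σ ∈ DU_{2m+1} : mmp^{(1,0,0,0)}(σ) = c}|. -/
noncomputable def DcountEq (m c : ℕ) : ℕ :=
  ((DUset (2 * m + 1)).filter (fun σ => mmp1000 σ = c)).card

open scoped Classical in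
/-- |{σ ∈ UD_{2m+1} : mmp^{(1,0,0,0)}(σ) = c}|. -/
noncomputable def BcountEq (m c : ℕ) : ℕ :=
  ((UDset (2 * m + 1)).filter (fun σ => mmp1000 σ = c)).card

open scoped Classical in
/-- |{σ ∈ DU_{2m} : mmp^{(1,0,0,0)}(σ) = c}|. -/
noncomputable def CcountEq (m c : ℕ) : ℕ :=
  ((DUset (2 * m)).filter (fun σ => mmp1000 σ = c)).card

theorem stmt17 (n k j : ℕ) (σ : Equiv.Perm (Fin (2 * n)))
    (h : IsUpDown σ) (hj1 : k + 2 ≤ j) (hj2 : j ≤ n)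
    (hσ : σ ⟨2 * j - 1, by omega⟩ = ⟨2 * n - 1, by omega⟩) :
    n + k < mmp1000 σ := by
  classical
  have hn2 : 2 ≤ n := by omega
  have hmem : ∀ i : Fin (2 * n), ((i : ℕ) % 2 = 0 ∨ (i : ℕ) < 2 * j - 1) →
      i ∈ Finset.univ.filter (fun i : Fin (2 * n) => ∃ j' : Fin (2 * n), i < j' ∧ σ i < σ j') := by
    intro i hi
    simp only [Finset.mem_filter, Finset.mem_univ, true_and]
    by_cases he : (i : ℕ) % 2 = 0
    · have hlt : (i : ℕ) + 1 < 2 * n := by have := i.isLt; omega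
      refine ⟨⟨(i : ℕ) + 1, hlt⟩, ?_, ?_⟩
      · simp [Fin.lt_def]
      · have := h i hlt
        rwa [if_pos he] at this
    · have hio : (i : ℕ) < 2 * j - 1 := by tauto
      refine ⟨⟨2 * j - 1, by omega⟩, ?_, ?_⟩
      · simp only [Fin.lt_def]; omega
      · have hσ' : σ (⟨2 * j - 1, by omega⟩ : Fin (2 * n)) = ⟨2 * n - 1, by omega⟩ := hσ
        rw [hσ']
        have h1 : (σ i : ℕ) < 2 * n := (σ i).isLt
        have hne : (σ i : ℕ) ≠ 2 * n - 1 := by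
          intro hc
          have : σ i = σ (⟨2 * j - 1, by omega⟩ : Fin (2 * n)) := by
            rw [hσ']; exact Fin.ext hc
          have := σ.injective this
          have := congrArg Fin.val this
          simp only at this
          omega
        simp only [Fin.lt_def]
        omega
  have key : n + j - 1 ≤ mmp1000 σ := by
    rw [mmp1000]
    have := Finset.card_le_card_of_injOn
      (f := fun m : ℕ => (⟨min (if m < n then 2 * m else 2 * (m - n) + 1) (2 * n - 1), by omega⟩ : Fin (2 * n)))
      (s := Finset.range (n + j - 1))
      (t := Finset.univ.filter (fun i : Fin (2 * n) => ∃ j' : Fin (2 * n), i < j' ∧ σ i < σ j')) ?_ ?_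
    · simpa using this
    · intro m hm
      simp only [Finset.mem_coe, Finset.mem_range] at hm ⊢
      apply hmem
      show (min _ _) % 2 = 0 ∨ (min _ _) < 2 * j - 1
      by_cases hc : m < n
      · left; rw [if_pos hc]; omega
      · right; rw [if_neg hc]; omega
    · intro a ha b hb hab
      simp only [Finset.coe_range, Set.mem_Iio] at ha hb
      have hval := congrArg Fin.val hab
      simp only at hval
      split_ifs at hval <;> omega
  omega
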